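/- Let 0 < β < 1 and b ∈ Λ̇_β(ℝⁿ) with b ≥ 0. Then for all 1 ≤ s < ∞, sup_Q |Q|^{−β/n} (|Q|^{−1} ∫_Q |b(x) − M_Q(b)(x)|^s dx)^{1/s} < ∞, where M_Q is the Hardy–Littlewood maximal function relative to the cube Q. -/

import Mathlib

open MeasureTheory ENNReal Set

noncomputable section

/-- An axis-parallel (closed) cube in `ℝⁿ`. -/
def IsCube (n : ℕ) (Q : Set (Fin n → ℝ)) : Prop :=
  ∃ (c : Fin n → ℝ) (h : ℝ), 0 < h ∧ Q = Set.univ.pi fun i => Set.Icc (c i) (c i + h)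

/-- The fractional maximal function `M_γ f (x) = sup_{Q ∋ x} |Q|^{γ/n-1} ∫_Q |f|`. -/
def fracMax (n : ℕ) (γ : ℝ) (f : (Fin n → ℝ) → ℝ) (x : Fin n → ℝ) : ℝ≥0∞ :=
  ⨆ (Q : Set (Fin n → ℝ)) (_ : IsCube n Q) (_ : x ∈ Q),
    volume Q ^ (γ / n - 1) * ∫⁻ y in Q, ‖f y‖₊

/-- The local fractional maximal function relative to a cube `Q₀`. -/
def localFracMax (n : ℕ) (γ : ℝ) (Q₀ : Set (Fin n → ℝ)) (f : (Fin n → ℝ) → ℝ)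
    (x : Fin n → ℝ) : ℝ≥0∞ :=
  ⨆ (Q : Set (Fin n → ℝ)) (_ : IsCube n Q) (_ : x ∈ Q) (_ : Q ⊆ Q₀),
    volume Q ^ (γ / n - 1) * ∫⁻ y in Q, ‖f y‖₊

/-- The maximal commutator `M_{α,b}`. -/
def maxComm (n : ℕ) (α : ℝ) (b f : (Fin n → ℝ) → ℝ) (x : Fin n → ℝ) : ℝ≥0∞ :=
  ⨆ (Q : Set (Fin n → ℝ)) (_ : IsCube n Q) (_ : x ∈ Q),
    volume Q ^ (α / n - 1) * ∫⁻ y in Q, (‖b x - b y‖₊ : ℝ≥0∞) * ‖f y‖₊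

/-- The nonlinear commutator `[b, M_α](f) = b · M_α(f) - M_α(b f)`. -/
def ncomm (n : ℕ) (α : ℝ) (b f : (Fin n → ℝ) → ℝ) (x : Fin n → ℝ) : ℝ :=
  b x * (fracMax n α f x).toReal - (fracMax n α (fun y => b y * f y) x).toReal

/-- Average of `b` over `Q`. -/
def cubeAvg (n : ℕ) (Q : Set (Fin n → ℝ)) (b : (Fin n → ℝ) → ℝ) : ℝ :=
  (volume Q).toReal⁻¹ * ∫ x in Q, b x


section
variable {n : ℕ}

lemma cube_volume (c : Fin n → ℝ) {h : ℝ} (hh : 0 ≤ h) :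
    volume (Set.univ.pi fun i => Set.Icc (c i) (c i + h)) = ENNReal.ofReal h ^ n := by
  rw [volume_pi_pi]
  simp [Real.volume_Icc]

lemma cube_meas {Q : Set (Fin n → ℝ)} (hQ : IsCube n Q) : MeasurableSet Q := by
  obtain ⟨c, h, hh, rfl⟩ := hQ
  exact MeasurableSet.univ_pi fun i => measurableSet_Icc

lemma cube_vol_pos {Q : Set (Fin n → ℝ)} (hQ : IsCube n Q) :
    volume Q ≠ 0 ∧ volume Q ≠ ⊤ := by
  obtain ⟨c, h, hh, rfl⟩ := hQ
  rw [cube_volume c hh.le]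
  refine ⟨?_, pow_ne_top ofReal_ne_top⟩
  have : (0:ℝ≥0∞) < ENNReal.ofReal h ^ n := by positivity
  exact this.ne'

lemma cube_dist {c : Fin n → ℝ} {h : ℝ} (hh : 0 < h)
    {x y : Fin n → ℝ} (hx : x ∈ Set.univ.pi fun i => Set.Icc (c i) (c i + h))
    (hy : y ∈ Set.univ.pi fun i => Set.Icc (c i) (c i + h)) : dist x y ≤ h := by
  rw [dist_pi_le_iff hh.le]
  intro i
  have h1 := hx i (mem_univ i)
  have h2 := hy i (mem_univ i)
  rw [Real.dist_eq, abs_le]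
  constructor <;> simp only [mem_Icc] at h1 h2 <;> linarith [h1.1, h1.2, h2.1, h2.2]

lemma cube_osc {β L : ℝ} (hβ0 : 0 < β) (hL : 0 ≤ L)
    {b : (Fin n → ℝ) → ℝ} (hb : ∀ x y, |b x - b y| ≤ L * dist x y ^ β)
    {Q : Set (Fin n → ℝ)} (hQ : IsCube n Q) {x y : Fin n → ℝ} (hx : x ∈ Q) (hy : y ∈ Q) :
    |b x - b y| ≤ L * (volume Q).toReal ^ (β / n) := by
  obtain ⟨c, h, hh, rfl⟩ := hQ
  rw [cube_volume c hh.le]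
  rcases Nat.eq_zero_or_pos n with hn | hn
  · subst hn
    have : dist x y = 0 := by rw [Subsingleton.elim x y]; simp
    calc |b x - b y| ≤ L * dist x y ^ β := hb x y
    _ = 0 := by rw [this, Real.zero_rpow hβ0.ne', mul_zero]
    _ ≤ _ := by positivity
  · have hvol : ((ENNReal.ofReal h ^ n).toReal : ℝ) = h ^ n := by
      rw [toReal_pow, ENNReal.toReal_ofReal hh.le]
    rw [hvol]
    have : ((h : ℝ) ^ n) ^ (β / n) = h ^ β := by
      rw [← Real.rpow_natCast h n, ← Real.rpow_mul hh.le]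
      congr 1
      field_simp
    rw [this]
    calc |b x - b y| ≤ L * dist x y ^ β := hb x y
    _ ≤ L * h ^ β := mul_le_mul_of_nonneg_left
          (Real.rpow_le_rpow dist_nonneg (cube_dist hh hx hy) hβ0.le) hL

lemma maximal_bounds {β L : ℝ} (hβ0 : 0 < β) (hL : 0 ≤ L)
    {b : (Fin n → ℝ) → ℝ} (hb : ∀ x y, |b x - b y| ≤ L * dist x y ^ β)
    (hb0 : ∀ x, 0 ≤ b x)
    {Q : Set (Fin n → ℝ)} (hQ : IsCube n Q) {x : Fin n → ℝ} (hx : x ∈ Q) :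
    ENNReal.ofReal (b x - L * (volume Q).toReal ^ (β / n)) ≤ localFracMax n 0 Q b x ∧
    localFracMax n 0 Q b x ≤ ENNReal.ofReal (b x + L * (volume Q).toReal ^ (β / n)) := by
  set K := L * (volume Q).toReal ^ (β / n) with hK
  have hexp : (0:ℝ) / n - 1 = -1 := by norm_num
  constructor
  · -- lower bound via R = Q
    refine le_trans ?_ (le_iSup_of_le Q (le_iSup_of_le hQ (le_iSup_of_le hx
      (le_iSup_of_le (subset_refl Q) le_rfl))))
    rw [hexp, ENNReal.rpow_neg_one]
    have h1 : ENNReal.ofReal (b x - K) * volume Q ≤ ∫⁻ y in Q, ‖b y‖₊ := by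
      rw [← setLIntegral_const Q]
      refine setLIntegral_mono' (cube_meas hQ) fun y hy => ?_
      rw [← enorm_eq_nnnorm, Real.enorm_eq_ofReal (hb0 y)]
      refine ENNReal.ofReal_le_ofReal ?_
      have := cube_osc hβ0 hL hb hQ hx hy
      have := abs_le.mp this
      linarith [this.1]
    calc ENNReal.ofReal (b x - K)
        = (volume Q)⁻¹ * (ENNReal.ofReal (b x - K) * volume Q) := by
          rw [mul_comm _ (volume Q), ← mul_assoc,
            ENNReal.inv_mul_cancel (cube_vol_pos hQ).1 (cube_vol_pos hQ).2, one_mul]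
      _ ≤ (volume Q)⁻¹ * ∫⁻ y in Q, ‖b y‖₊ := by gcongr
  · refine iSup_le fun R => iSup_le fun hR => iSup_le fun hxR => iSup_le fun hRQ => ?_
    rw [hexp, ENNReal.rpow_neg_one]
    have h1 : (∫⁻ y in R, ‖b y‖₊) ≤ ENNReal.ofReal (b x + K) * volume R := by
      rw [← setLIntegral_const R]
      refine setLIntegral_mono' (cube_meas hR) fun y hy => ?_
      rw [← enorm_eq_nnnorm, Real.enorm_eq_ofReal (hb0 y)]
      refine ENNReal.ofReal_le_ofReal ?_
      have := abs_le.mp (cube_osc hβ0 hL hb hQ hx (hRQ hy))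
      linarith [this.2]
    calc (volume R)⁻¹ * ∫⁻ y in R, ‖b y‖₊
        ≤ (volume R)⁻¹ * (ENNReal.ofReal (b x + K) * volume R) := by gcongr
      _ = ENNReal.ofReal (b x + K) := by
          rw [mul_comm _ (volume R), ← mul_assoc,
            ENNReal.inv_mul_cancel (cube_vol_pos hR).1 (cube_vol_pos hR).2, one_mul]

lemma pointwise_bound {β L : ℝ} (hβ0 : 0 < β) (hL : 0 ≤ L)
    {b : (Fin n → ℝ) → ℝ} (hb : ∀ x y, |b x - b y| ≤ L * dist x y ^ β)
    (hb0 : ∀ x, 0 ≤ b x)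
    {Q : Set (Fin n → ℝ)} (hQ : IsCube n Q) {x : Fin n → ℝ} (hx : x ∈ Q) :
    ((b x : EReal) - (localFracMax n 0 Q b x : EReal)).abs
      ≤ ENNReal.ofReal (L * (volume Q).toReal ^ (β / n)) := by
  obtain ⟨hlo, hhi⟩ := maximal_bounds hβ0 hL hb hb0 hQ hx
  set K := L * (volume Q).toReal ^ (β / n) with hK
  have hK0 : 0 ≤ K := by
    have : (0:ℝ) ≤ (volume Q).toReal ^ (β / n) := Real.rpow_nonneg ENNReal.toReal_nonneg _
    positivity
  set M := localFracMax n 0 Q b x with hM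
  have hMtop : M ≠ ⊤ := by
    intro h
    rw [h] at hhi
    exact (lt_of_le_of_lt hhi ofReal_lt_top).ne rfl
  have hMR : M.toReal ≤ b x + K := by
    have := ENNReal.toReal_mono ofReal_ne_top hhi
    rwa [ENNReal.toReal_ofReal (add_nonneg (hb0 x) hK0)] at this
  have hML : b x - K ≤ M.toReal := by
    have h2 := ENNReal.toReal_mono hMtop hlo
    rcases le_or_gt (b x - K) 0 with hc | hc
    · exact hc.trans ENNReal.toReal_nonneg
    · rwa [ENNReal.toReal_ofReal hc.le] at h2
  have hcoe : (M : EReal) = ((M.toReal : ℝ) : EReal) := by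
    rw [← EReal.toReal_coe_ennreal (x := M)]
    exact (EReal.coe_toReal (by simp [hMtop]) (EReal.coe_ennreal_ne_bot M)).symm
  rw [hcoe, ← EReal.coe_sub, EReal.abs_def]
  exact ENNReal.ofReal_le_ofReal (abs_le.mpr ⟨by linarith, by linarith⟩)


end

theorem stmt12 (n : ℕ) (β L : ℝ) (hβ0 : 0 < β) (hβ1 : β < 1) (hL : 0 ≤ L)
    (b : (Fin n → ℝ) → ℝ) (hb : ∀ x y, |b x - b y| ≤ L * dist x y ^ β)
    (hb0 : ∀ x, 0 ≤ b x) :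
    ∀ s : ℝ, 1 ≤ s → ∃ C : ℝ≥0∞, C ≠ ⊤ ∧ ∀ Q : Set (Fin n → ℝ), IsCube n Q →
      volume Q ^ (-(β / (n : ℝ))) *
        ((volume Q)⁻¹ *
          ∫⁻ x in Q, ((b x : EReal) - (localFracMax n 0 Q b x : EReal)).abs ^ s) ^ (1 / s)
      ≤ C := by
  intro s hs
  refine ⟨ENNReal.ofReal L, ofReal_ne_top, fun Q hQ => ?_⟩
  obtain ⟨hv0, hvtop⟩ := cube_vol_pos hQ
  have hs0 : (0:ℝ) < s := lt_of_lt_of_le one_pos hs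
  set K' : ℝ≥0∞ := ENNReal.ofReal (L * (volume Q).toReal ^ (β / n)) with hK'
  have hint : (∫⁻ x in Q, ((b x : EReal) - (localFracMax n 0 Q b x : EReal)).abs ^ s)
      ≤ K' ^ s * volume Q := by
    rw [← setLIntegral_const Q]
    refine setLIntegral_mono' (cube_meas hQ) fun x hx => ?_
    exact ENNReal.rpow_le_rpow (pointwise_bound hβ0 hL hb hb0 hQ hx) hs0.le
  have hKeq : K' = ENNReal.ofReal L * volume Q ^ (β / n) := by
    rw [hK', ENNReal.ofReal_mul hL,
      ← ENNReal.ofReal_rpow_of_pos (ENNReal.toReal_pos hv0 hvtop),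
      ENNReal.ofReal_toReal hvtop]
  calc volume Q ^ (-(β / (n:ℝ))) *
        ((volume Q)⁻¹ *
          ∫⁻ x in Q, ((b x : EReal) - (localFracMax n 0 Q b x : EReal)).abs ^ s) ^ (1 / s)
      ≤ volume Q ^ (-(β / (n:ℝ))) * ((volume Q)⁻¹ * (K' ^ s * volume Q)) ^ (1 / s) := by
        gcongr
    _ = volume Q ^ (-(β / (n:ℝ))) * K' := by
        rw [mul_comm (K' ^ s) (volume Q), ← mul_assoc,
          ENNReal.inv_mul_cancel hv0 hvtop, one_mul, ← ENNReal.rpow_mul,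
          mul_one_div_cancel hs0.ne', ENNReal.rpow_one]
    _ = ENNReal.ofReal L := by
        rw [hKeq, ← mul_assoc, mul_comm (volume Q ^ (-(β / (n:ℝ)))),
          mul_assoc, ← ENNReal.rpow_add _ _ hv0 hvtop]
        norm_num
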